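/- Let θ ≥ 0 and δ₁,…,δ_d > 0. The family F = {f_σ(x,y) = σ^θ ∏_{i=1}^d (σ(x_i−y_i)²)^{δ_i} e^{−σ(x_i−y_i)²} : σ ∈ (0,∞)} of functions on ℝ^d × ℝ^d has pseudo-dimension at most 2: no three-point set is pseudo-shattered by F. -/

import Mathlib

open scoped BigOperators

lemma quasi {d : ℕ} (θ : ℝ) (hθ : 0 ≤ θ) (δ : Fin d → ℝ) (hδ : ∀ j, 0 < δ j)
    (t : Fin d → ℝ) (ht : ∀ j, 0 ≤ t j) (r : ℝ) :
    ∀ a b c : ℝ, 0 < a → a < b → b < c →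
      r < a ^ θ * ∏ j, ((a * t j) ^ (δ j) * Real.exp (-a * t j)) →
      r < c ^ θ * ∏ j, ((c * t j) ^ (δ j) * Real.exp (-c * t j)) →
      r < b ^ θ * ∏ j, ((b * t j) ^ (δ j) * Real.exp (-b * t j)) := by
  intro a b c ha hab hbc hga hgc
  have hb : 0 < b := ha.trans hab
  have hc : 0 < c := hb.trans hbc
  by_cases hC : ∃ j, t j = 0
  · obtain ⟨j0, hj0⟩ := hC
    have hz : ∀ σ : ℝ, ∏ j, ((σ * t j) ^ (δ j) * Real.exp (-σ * t j)) = 0 := by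
      intro σ
      apply Finset.prod_eq_zero (Finset.mem_univ j0)
      rw [hj0, mul_zero, Real.zero_rpow (ne_of_gt (hδ j0)), zero_mul]
    rw [hz, mul_zero] at hga ⊢
    exact hga
  · push_neg at hC
    have htp : ∀ j, 0 < t j := fun j => lt_of_le_of_ne (ht j) (Ne.symm (hC j))
    set P : ℝ := θ + ∑ j, δ j with hP
    set T : ℝ := ∑ j, t j with hT
    set S : ℝ := ∑ j, δ j * Real.log (t j) with hS
    have hPnn : 0 ≤ P := by
      have : 0 ≤ ∑ j, δ j := Finset.sum_nonneg fun j _ => (hδ j).le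
      linarith
    have key : ∀ σ : ℝ, 0 < σ →
        Real.log (σ ^ θ * ∏ j, ((σ * t j) ^ (δ j) * Real.exp (-σ * t j)))
          = P * Real.log σ + S - σ * T := by
      intro σ hσ
      have hfac : ∀ j : Fin d, (0:ℝ) < (σ * t j) ^ (δ j) * Real.exp (-σ * t j) := by
        intro j
        exact mul_pos (Real.rpow_pos_of_pos (mul_pos hσ (htp j)) _) (Real.exp_pos _)
      have hprod : 0 < ∏ j, ((σ * t j) ^ (δ j) * Real.exp (-σ * t j)) :=
        Finset.prod_pos fun j _ => hfac j
      rw [Real.log_mul (ne_of_gt (Real.rpow_pos_of_pos hσ θ)) (ne_of_gt hprod),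
        Real.log_rpow hσ, Real.log_prod (fun j _ => ne_of_gt (hfac j))]
      have hterm : ∀ j : Fin d,
          Real.log ((σ * t j) ^ (δ j) * Real.exp (-σ * t j))
            = δ j * Real.log σ + δ j * Real.log (t j) + (-σ * t j) := by
        intro j
        rw [Real.log_mul (ne_of_gt (Real.rpow_pos_of_pos (mul_pos hσ (htp j)) _))
            (ne_of_gt (Real.exp_pos _)),
          Real.log_rpow (mul_pos hσ (htp j)), Real.log_exp,
          Real.log_mul (ne_of_gt hσ) (ne_of_gt (htp j))]
        ring
      rw [Finset.sum_congr rfl fun j _ => hterm j]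
      rw [Finset.sum_add_distrib, Finset.sum_add_distrib, ← Finset.sum_mul]
      simp only [hP, hS, hT, neg_mul, Finset.sum_neg_distrib, ← Finset.mul_sum]
      ring
    by_contra hgb
    push_neg at hgb
    have hprodpos : ∀ σ : ℝ, 0 < σ →
        0 < σ ^ θ * ∏ j, ((σ * t j) ^ (δ j) * Real.exp (-σ * t j)) := by
      intro σ hσ
      exact mul_pos (Real.rpow_pos_of_pos hσ _)
        (Finset.prod_pos fun j _ => mul_pos (Real.rpow_pos_of_pos (mul_pos hσ (htp j)) _)
          (Real.exp_pos _))
    have h1 : Real.log (b ^ θ * ∏ j, ((b * t j) ^ (δ j) * Real.exp (-b * t j)))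
        < Real.log (a ^ θ * ∏ j, ((a * t j) ^ (δ j) * Real.exp (-a * t j))) :=
      Real.log_lt_log (hprodpos b hb) (lt_of_le_of_lt hgb hga)
    have h2 : Real.log (b ^ θ * ∏ j, ((b * t j) ^ (δ j) * Real.exp (-b * t j)))
        < Real.log (c ^ θ * ∏ j, ((c * t j) ^ (δ j) * Real.exp (-c * t j))) :=
      Real.log_lt_log (hprodpos b hb) (lt_of_le_of_lt hgb hgc)
    rw [key a ha, key b hb, key c hc] at *
    -- h1 : P * log b + S - b*T < P * log a + S - a*T
    -- h2 : P * log b + S - b*T < P * log c + S - c*T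
    have hslope : (Real.log c - Real.log b) / (c - b)
        ≤ (Real.log b - Real.log a) / (b - a) :=
      strictConcaveOn_log_Ioi.concaveOn.slope_anti_adjacent (Set.mem_Ioi.2 ha)
        (Set.mem_Ioi.2 hc) hab hbc
    have hba : 0 < b - a := by linarith
    have hcb : 0 < c - b := by linarith
    have hs' : (Real.log c - Real.log b) * (b - a) ≤ (Real.log b - Real.log a) * (c - b) :=
      by rw [div_le_div_iff₀ hcb hba] at hslope; linarith
    have hs'' : P * ((Real.log c - Real.log b) * (b - a))
        ≤ P * ((Real.log b - Real.log a) * (c - b)) :=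
      mul_le_mul_of_nonneg_left hs' hPnn
    have e1 : P * (Real.log b - Real.log a) < (b - a) * T := by linarith
    have e2 : (c - b) * T < P * (Real.log c - Real.log b) := by linarith
    nlinarith [mul_lt_mul_of_pos_right e1 hcb, mul_lt_mul_of_pos_right e2 hba]

lemma pair_helper (f₁ f₂ : ℝ → ℝ) (r₁ r₂ : ℝ)
    (Q₁ : ∀ a b c : ℝ, 0 < a → a < b → b < c → r₁ < f₁ a → r₁ < f₁ c → r₁ < f₁ b)
    (Q₂ : ∀ a b c : ℝ, 0 < a → a < b → b < c → r₂ < f₂ a → r₂ < f₂ c → r₂ < f₂ b)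
    (p q s : ℝ) (hp : 0 < p) (hq : 0 < q) (hs : 0 < s)
    (h1 : f₁ p < r₁) (h2 : r₂ < f₂ p) (h3 : r₁ < f₁ q) (h4 : f₂ q < r₂)
    (h5 : r₁ < f₁ s) (h6 : r₂ < f₂ s)
    (hside : (p < s ∧ q < s) ∨ (s < p ∧ s < q)) : False := by
  rcases lt_trichotomy p q with hpq | hpq | hpq
  · rcases hside with ⟨hps, hqs⟩ | ⟨hsp, hsq⟩
    · exact absurd (Q₂ p q s hp hpq hqs h2 h6) (not_lt.2 h4.le)
    · exact absurd (Q₁ s p q hs hsp hpq h5 h3) (not_lt.2 h1.le)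
  · subst hpq; exact absurd h3 (not_lt.2 h1.le)
  · rcases hside with ⟨hps, hqs⟩ | ⟨hsp, hsq⟩
    · exact absurd (Q₁ q p s hq hpq hps h3 h5) (not_lt.2 h1.le)
    · exact absurd (Q₂ s q p hs hsq hpq h6 h2) (not_lt.2 h4.le)

/-- For `θ ≥ 0` and `δ₁,…,δ_d > 0`, the family
`F = {(x,y) ↦ σ^θ ∏_i (σ(x_i−y_i)²)^{δ_i} e^{−σ(x_i−y_i)²} : σ ∈ (0,∞)}` of functions on
`ℝ^d × ℝ^d` has pseudo-dimension at most 2: no three-point set is pseudo-shattered by `F`. -/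
theorem stmt_9 (d : ℕ) (θ : ℝ) (hθ : 0 ≤ θ) (δ : Fin d → ℝ) (hδ : ∀ i, 0 < δ i) :
    ∀ z : Fin 3 → (Fin d → ℝ) × (Fin d → ℝ), Function.Injective z →
      ¬ ∃ r : Fin 3 → ℝ, ∀ b : Fin 3 → Bool, ∃ σ : ℝ, 0 < σ ∧
        ∀ i, if b i
          then σ ^ θ * ∏ j, ((σ * ((z i).1 j - (z i).2 j) ^ 2) ^ (δ j)
                 * Real.exp (-σ * ((z i).1 j - (z i).2 j) ^ 2)) > r i
          else σ ^ θ * ∏ j, ((σ * ((z i).1 j - (z i).2 j) ^ 2) ^ (δ j)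
                 * Real.exp (-σ * ((z i).1 j - (z i).2 j) ^ 2)) < r i := by
  intro z hz
  rintro ⟨r, hr⟩
  set G : ℝ → Fin 3 → ℝ := fun σ i =>
    σ ^ θ * ∏ j, ((σ * ((z i).1 j - (z i).2 j) ^ 2) ^ (δ j)
      * Real.exp (-σ * ((z i).1 j - (z i).2 j) ^ 2)) with hG
  have Q : ∀ (i : Fin 3), ∀ a b c : ℝ, 0 < a → a < b → b < c →
      r i < G a i → r i < G c i → r i < G b i := by
    intro i
    simp only [hG]
    exact quasi θ hθ δ hδ (fun j => ((z i).1 j - (z i).2 j) ^ 2)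
      (fun j => sq_nonneg _) (r i)
  obtain ⟨σt, hσt, hT⟩ := hr (fun _ => true)
  obtain ⟨σ0, hσ0, h0⟩ := hr (fun i => decide (i ≠ 0))
  obtain ⟨σ1, hσ1, h1⟩ := hr (fun i => decide (i ≠ 1))
  obtain ⟨σ2, hσ2, h2⟩ := hr (fun i => decide (i ≠ 2))
  have hT0 : r 0 < G σt 0 := by
    simp only [hG]; have h := hT 0; rwa [if_pos rfl] at h
  have hT1 : r 1 < G σt 1 := by
    simp only [hG]; have h := hT 1; rwa [if_pos rfl] at h
  have hT2 : r 2 < G σt 2 := by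
    simp only [hG]; have h := hT 2; rwa [if_pos rfl] at h
  have h00 : G σ0 0 < r 0 := by
    simp only [hG]; have h := h0 0; rwa [if_neg (by decide)] at h
  have h01 : r 1 < G σ0 1 := by
    simp only [hG]; have h := h0 1; rwa [if_pos (by decide)] at h
  have h02 : r 2 < G σ0 2 := by
    simp only [hG]; have h := h0 2; rwa [if_pos (by decide)] at h
  have h10 : r 0 < G σ1 0 := by
    simp only [hG]; have h := h1 0; rwa [if_pos (by decide)] at h
  have h11 : G σ1 1 < r 1 := by
    simp only [hG]; have h := h1 1; rwa [if_neg (by decide)] at h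
  have h12 : r 2 < G σ1 2 := by
    simp only [hG]; have h := h1 2; rwa [if_pos (by decide)] at h
  have h20 : r 0 < G σ2 0 := by
    simp only [hG]; have h := h2 0; rwa [if_pos (by decide)] at h
  have h21 : r 1 < G σ2 1 := by
    simp only [hG]; have h := h2 1; rwa [if_pos (by decide)] at h
  have h22 : G σ2 2 < r 2 := by
    simp only [hG]; have h := h2 2; rwa [if_neg (by decide)] at h
  have hd0 : σ0 ≠ σt := fun h => absurd hT0 (not_lt.2 (h ▸ h00).le)
  have hd1 : σ1 ≠ σt := fun h => absurd hT1 (not_lt.2 (h ▸ h11).le)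
  have hd2 : σ2 ≠ σt := fun h => absurd hT2 (not_lt.2 (h ▸ h22).le)
  rcases hd0.lt_or_gt with c0 | c0 <;> rcases hd1.lt_or_gt with c1 | c1 <;>
    rcases hd2.lt_or_gt with c2 | c2
  · exact pair_helper (fun σ => G σ 0) (fun σ => G σ 1) (r 0) (r 1) (Q 0) (Q 1)
      σ0 σ1 σt hσ0 hσ1 hσt h00 h01 h10 h11 hT0 hT1 (Or.inl ⟨c0, c1⟩)
  · exact pair_helper (fun σ => G σ 0) (fun σ => G σ 1) (r 0) (r 1) (Q 0) (Q 1)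
      σ0 σ1 σt hσ0 hσ1 hσt h00 h01 h10 h11 hT0 hT1 (Or.inl ⟨c0, c1⟩)
  · exact pair_helper (fun σ => G σ 0) (fun σ => G σ 2) (r 0) (r 2) (Q 0) (Q 2)
      σ0 σ2 σt hσ0 hσ2 hσt h00 h02 h20 h22 hT0 hT2 (Or.inl ⟨c0, c2⟩)
  · exact pair_helper (fun σ => G σ 1) (fun σ => G σ 2) (r 1) (r 2) (Q 1) (Q 2)
      σ1 σ2 σt hσ1 hσ2 hσt h11 h12 h21 h22 hT1 hT2 (Or.inr ⟨c1, c2⟩)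
  · exact pair_helper (fun σ => G σ 1) (fun σ => G σ 2) (r 1) (r 2) (Q 1) (Q 2)
      σ1 σ2 σt hσ1 hσ2 hσt h11 h12 h21 h22 hT1 hT2 (Or.inl ⟨c1, c2⟩)
  · exact pair_helper (fun σ => G σ 0) (fun σ => G σ 2) (r 0) (r 2) (Q 0) (Q 2)
      σ0 σ2 σt hσ0 hσ2 hσt h00 h02 h20 h22 hT0 hT2 (Or.inr ⟨c0, c2⟩)
  · exact pair_helper (fun σ => G σ 0) (fun σ => G σ 1) (r 0) (r 1) (Q 0) (Q 1)
      σ0 σ1 σt hσ0 hσ1 hσt h00 h01 h10 h11 hT0 hT1 (Or.inr ⟨c0, c1⟩)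
  · exact pair_helper (fun σ => G σ 0) (fun σ => G σ 1) (r 0) (r 1) (Q 0) (Q 1)
      σ0 σ1 σt hσ0 hσ1 hσt h00 h01 h10 h11 hT0 hT1 (Or.inr ⟨c0, c1⟩)
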